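/- arXiv:2312.03269 — 4 statements merged into one kernel-verified Lean document; each statement's English description precedes it below -/
import Mathlib

section
/- For 0 < α < 1/2, ∫_0^1 (1 - n^α)/(1-n)^{α+1} dn = (Γ(1+α) Γ(1-α) - 1)/α. -/
open MeasureTheory intervalIntegral Real Set Filter Topology

theorem integral_one_sub_rpow_div (α : ℝ) (hα : 0 < α) (hα2 : α < 1/2) :
    ∫ n in (0:ℝ)..1, (1 - n ^ α) / (1 - n) ^ (α + 1) =
      (Real.Gamma (1 + α) * Real.Gamma (1 - α) - 1) / α := by
  have hα1 : α < 1 := by linarith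
  have h1α : (0:ℝ) < 1 - α := by linarith
  set f : ℝ → ℝ := fun x => (1 - x ^ α) / (1 - x) ^ (α + 1) with hfdef
  set g : ℝ → ℝ := fun x => x ^ (α - 1) * (1 - x) ^ (-α) with hgdef
  set F : ℝ → ℝ := fun x => -(1 - x ^ α) * (1 - x) ^ (-α) / α with hFdef
  -- integrable bound (1-x)^(-α)
  have hbound : IntervalIntegrable (fun x : ℝ => (1 - x) ^ (-α)) volume 0 1 := by
    have := (intervalIntegral.intervalIntegrable_rpow' (a := 0) (b := 1) (r := -α)
      (by linarith)).comp_sub_left 1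
    simpa using this.symm
  -- f is integrable
  have hf_int : IntervalIntegrable f volume 0 1 := by
    rw [intervalIntegrable_iff_integrableOn_Ioc_of_le zero_le_one]
    have hbd := (intervalIntegrable_iff_integrableOn_Ioc_of_le (zero_le_one)).mp hbound
    refine MeasureTheory.Integrable.mono hbd ?_ ?_
    · apply Measurable.aestronglyMeasurable
      fun_prop
    · filter_upwards [ae_restrict_mem measurableSet_Ioc] with x hx
      obtain ⟨hx0, hx1⟩ := hx
      rcases eq_or_lt_of_le hx1 with h | h
      · subst h
        simp [hfdef, Real.one_rpow, Real.zero_rpow (by positivity : α + 1 ≠ 0),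
          Real.zero_rpow (by linarith : -α ≠ 0)]
      · have h1x : (0:ℝ) < 1 - x := by linarith
        have hxa1 : x ^ α ≤ 1 := Real.rpow_le_one hx0.le hx1 hα.le
        have hxax : x ≤ x ^ α := by
          simpa using Real.rpow_le_rpow_of_exponent_ge hx0 hx1 hα1.le
        have hfpos : 0 ≤ f x := by
          apply div_nonneg (by linarith) (Real.rpow_nonneg h1x.le _)
        have hbpos : 0 ≤ (1 - x) ^ (-α) := Real.rpow_nonneg h1x.le _
        rw [Real.norm_eq_abs, Real.norm_eq_abs, abs_of_nonneg hfpos, abs_of_nonneg hbpos]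
        have h2 : (1 - x) ^ (-α) = (1 - x) ^ (1:ℝ) / (1 - x) ^ (α + 1) := by
          rw [← Real.rpow_sub h1x]; ring_nf
        rw [h2, Real.rpow_one, hfdef]
        rw [div_le_div_iff_of_pos_right (Real.rpow_pos_of_pos h1x _)]
        linarith
  -- complex beta integrand agrees with g on [0,1]
  have hgc : ∀ x ∈ Set.Icc (0:ℝ) 1,
      (x:ℂ) ^ ((α:ℂ) - 1) * ((1:ℂ) - x) ^ ((1 - (α:ℂ)) - 1) = ((g x : ℝ) : ℂ) := by
    intro x hx
    obtain ⟨hx0, hx1⟩ := hx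
    have h1x : (0:ℝ) ≤ 1 - x := by linarith
    have e1 : ((α:ℂ) - 1) = ((α - 1 : ℝ) : ℂ) := by push_cast; ring
    have e2 : ((1 - (α:ℂ)) - 1) = ((-α : ℝ) : ℂ) := by push_cast; ring
    have e3 : ((1:ℂ) - x) = ((1 - x : ℝ) : ℂ) := by push_cast; ring
    rw [e1, e2, e3, ← Complex.ofReal_cpow hx0, ← Complex.ofReal_cpow h1x, hgdef]
    push_cast
    ring
  have hcint := Complex.betaIntegral_convergent (u := (α:ℂ)) (v := 1 - (α:ℂ))
    (by simpa using hα) (by simpa using h1α)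
  -- g is integrable
  have hg_int : IntervalIntegrable g volume 0 1 := by
    rw [intervalIntegrable_iff_integrableOn_Ioc_of_le zero_le_one]
    rw [intervalIntegrable_iff_integrableOn_Ioc_of_le zero_le_one] at hcint
    have hre := hcint.re
    apply hre.congr
    filter_upwards [ae_restrict_mem measurableSet_Ioc] with x hx
    have := hgc x (Ioc_subset_Icc_self hx)
    simpa using congrArg Complex.re this
  -- beta integral value
  have hB : ∫ x in (0:ℝ)..1, g x = Real.Gamma α * Real.Gamma (1 - α) := by
    have h := Complex.Gamma_mul_Gamma_eq_betaIntegral (s := (α:ℂ)) (t := 1 - (α:ℂ))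
      (by simpa using hα) (by simpa using h1α)
    rw [show (α:ℂ) + (1 - (α:ℂ)) = 1 by ring, Complex.Gamma_one, one_mul] at h
    have hbeta : Complex.betaIntegral (α:ℂ) (1 - (α:ℂ)) = ((∫ x in (0:ℝ)..1, g x : ℝ) : ℂ) := by
      rw [Complex.betaIntegral, ← intervalIntegral.integral_ofReal]
      apply intervalIntegral.integral_congr
      intro x hx
      exact hgc x (by simpa [Set.uIcc_of_le (zero_le_one' ℝ)] using hx)
    rw [hbeta, show (1 - (α:ℂ)) = ((1 - α : ℝ) : ℂ) by push_cast; ring,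
      Complex.Gamma_ofReal, Complex.Gamma_ofReal] at h
    exact_mod_cast h.symm
  -- derivative of F
  have hderiv : ∀ x ∈ Set.Ioo (0:ℝ) 1, HasDerivAt F (g x - f x) x := by
    intro x hx
    obtain ⟨hx0, hx1⟩ := hx
    have h1x : (0:ℝ) < 1 - x := by linarith
    have d1 : HasDerivAt (fun y : ℝ => 1 - y ^ α) (-(α * x ^ (α - 1))) x :=
      (Real.hasDerivAt_rpow_const (p := α) (Or.inl hx0.ne')).const_sub 1
    have d2 : HasDerivAt (fun y : ℝ => (1 - y) ^ (-α)) (-1 * -α * (1 - x) ^ (-α - 1)) x := by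
      have dlin : HasDerivAt (fun y : ℝ => 1 - y) (-1) x := (hasDerivAt_id x).const_sub 1
      exact dlin.rpow_const (Or.inl h1x.ne')
    have dF := ((d1.neg.mul d2).div_const α)
    refine dF.congr_deriv ?_
    have hne : (1 - x) ^ (α + 1) ≠ 0 := (Real.rpow_pos_of_pos h1x _).ne'
    have e1 : (1 - x) ^ (-α - 1) = ((1 - x) ^ (α + 1))⁻¹ := by
      rw [show -α - 1 = -(α + 1) by ring, Real.rpow_neg h1x.le]
    rw [hgdef, hfdef]
    simp only [Pi.neg_apply]
    rw [e1]
    field_simp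
    ring
  -- limit at 0
  have hF0 : Tendsto F (nhdsWithin 0 (Set.Ioi 0)) (nhds (-(1/α))) := by
    have c1 : ContinuousAt (fun y : ℝ => y ^ α) 0 :=
      continuousAt_id.rpow_const (Or.inr hα.le)
    have c2 : ContinuousAt (fun y : ℝ => (1 - y) ^ (-α)) 0 := by
      have clin : ContinuousAt (fun y : ℝ => (1:ℝ) - y) 0 :=
        (continuous_const.sub continuous_id).continuousAt
      exact clin.rpow_const (Or.inl (by norm_num))
    have hc : ContinuousAt F 0 := ((continuousAt_const.sub c1).neg.mul c2).div_const α
    have hF0v : F 0 = -(1/α) := by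
      rw [hFdef]
      norm_num [Real.zero_rpow hα.ne', Real.one_rpow, one_div]
      ring
    have := hc.tendsto
    rw [hF0v] at this
    exact this.mono_left nhdsWithin_le_nhds
  -- limit at 1
  have hF1 : Tendsto F (nhdsWithin 1 (Set.Iio 1)) (nhds 0) := by
    apply squeeze_zero_norm' (a := fun x => (1 - x) ^ (1 - α) / α)
    · filter_upwards [Ioo_mem_nhdsLT_of_mem (show (1:ℝ) ∈ Set.Ioc 0 1 by norm_num)]
        with x hx
      obtain ⟨hx0, hx1⟩ := hx
      have h1x : (0:ℝ) < 1 - x := by linarith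
      have hxa1 : x ^ α ≤ 1 := Real.rpow_le_one hx0.le hx1.le hα.le
      have hxax : x ≤ x ^ α := by
        simpa using Real.rpow_le_rpow_of_exponent_ge hx0 hx1.le hα1.le
      have hbpos : (0:ℝ) ≤ (1 - x) ^ (-α) := Real.rpow_nonneg h1x.le _
      have hFx : ‖F x‖ = (1 - x ^ α) * (1 - x) ^ (-α) / α := by
        rw [hFdef, Real.norm_eq_abs]
        simp only
        rw [abs_div, abs_of_pos hα, abs_of_nonpos (by nlinarith)]
        ring
      rw [hFx]
      have e1 : (1 - x) ^ (1 - α) = (1 - x) * (1 - x) ^ (-α) := by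
        rw [show (1:ℝ) - α = 1 + -α by ring, Real.rpow_add h1x, Real.rpow_one]
      rw [e1]
      gcongr
      all_goals first
      | exact hbpos
      | linarith
    · have clin : ContinuousAt (fun y : ℝ => (1:ℝ) - y) 1 :=
        (continuous_const.sub continuous_id).continuousAt
      have c1 : ContinuousAt (fun y : ℝ => (1 - y) ^ (1 - α)) 1 :=
        clin.rpow_const (Or.inr h1α.le)
      have hc : ContinuousAt (fun y : ℝ => (1 - y) ^ (1 - α) / α) 1 := c1.div_const α
      have h := hc.tendsto.mono_left (nhdsWithin_le_nhds (s := Set.Iio (1:ℝ)))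
      simpa [Real.zero_rpow h1α.ne'] using h
  -- FTC
  have key : ∫ x in (0:ℝ)..1, (g x - f x) = 0 - (-(1/α)) :=
    intervalIntegral.integral_eq_sub_of_hasDerivAt_of_tendsto zero_lt_one hderiv
      (hg_int.sub hf_int) hF0 hF1
  rw [intervalIntegral.integral_sub hg_int hf_int, hB] at key
  have hfin : ∫ x in (0:ℝ)..1, f x = Real.Gamma α * Real.Gamma (1 - α) - 1/α := by
    linarith
  rw [hfin, show (1:ℝ) + α = α + 1 by ring, Real.Gamma_add_one hα.ne']
  field_simp
end

section
/- Let σ: ℝ² → ℝ be Lipschitz with constant L₁, and let X_t = x + ∫_0^t σ(X_s, Y_s) ds, φ⁽¹⁾_t = x + ∫_0^t σ(φ⁽¹⁾_s, φ⁽²⁾_s) ds on [0,1] for continuous Y, φ⁽²⁾. Then for 0 < β < 1 the β-Hölder seminorm satisfies ‖X - φ⁽¹⁾‖_β ≤ C(L₁) ‖Y - φ⁽²⁾‖_β, where ‖f‖_β = sup_{s≠t} |f_t - f_s|/|t-s|^β. -/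
open MeasureTheory intervalIntegral

theorem holder_seminorm_comparison_degenerate
    (L₁ β : ℝ) (hL : 0 ≤ L₁) (hβ : 0 < β) (hβ1 : β < 1) :
    ∃ C : ℝ, 0 < C ∧
      ∀ (σ : ℝ × ℝ → ℝ),
        (∀ p q : ℝ × ℝ, |σ p - σ q| ≤ L₁ * (|p.1 - q.1| + |p.2 - q.2|)) →
      ∀ (x : ℝ) (X Y φ₁ φ₂ : ℝ → ℝ),
        Continuous X → Continuous Y → Continuous φ₁ → Continuous φ₂ →
        (∀ t ∈ Set.Icc (0:ℝ) 1, X t = x + ∫ s in (0:ℝ)..t, σ (X s, Y s)) →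
        (∀ t ∈ Set.Icc (0:ℝ) 1, φ₁ t = x + ∫ s in (0:ℝ)..t, σ (φ₁ s, φ₂ s)) →
        Y 0 = φ₂ 0 →
        ∀ K : ℝ, 0 ≤ K →
          (∀ u ∈ Set.Icc (0:ℝ) 1, ∀ v ∈ Set.Icc (0:ℝ) 1,
            |(Y v - φ₂ v) - (Y u - φ₂ u)| ≤ K * |v - u| ^ β) →
          ∀ u ∈ Set.Icc (0:ℝ) 1, ∀ v ∈ Set.Icc (0:ℝ) 1,
            |(X v - φ₁ v) - (X u - φ₁ u)| ≤ C * K * |v - u| ^ β := by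
  refine ⟨L₁ * (Real.exp L₁ + 1) + 1, by positivity, ?_⟩
  intro σ hσ x X Y φ₁ φ₂ hXc hYc hφ₁c hφ₂c hX hφ₁ hY0 K hK hE u hu v hv
  -- σ is continuous
  have hσc : Continuous σ := by
    refine (LipschitzWith.of_dist_le_mul (K := (2 * L₁).toNNReal) ?_).continuous
    intro p q
    rw [Real.coe_toNNReal _ (by positivity)]
    have := hσ p q
    rw [Real.dist_eq]
    refine this.trans ?_
    rw [Prod.dist_eq, Real.dist_eq, Real.dist_eq]
    have h1 : |p.1 - q.1| ≤ max |p.1 - q.1| |p.2 - q.2| := le_max_left _ _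
    have h2 : |p.2 - q.2| ≤ max |p.1 - q.1| |p.2 - q.2| := le_max_right _ _
    nlinarith [abs_nonneg (p.1 - q.1), abs_nonneg (p.2 - q.2)]
  set g : ℝ → ℝ := fun s => σ (X s, Y s) - σ (φ₁ s, φ₂ s) with hg_def
  have hgc : Continuous g :=
    (hσc.comp (hXc.prodMk hYc)).sub (hσc.comp (hφ₁c.prodMk hφ₂c))
  set D : ℝ → ℝ := fun t => ∫ s in (0:ℝ)..t, g s with hD_def
  have hDeq : ∀ t ∈ Set.Icc (0:ℝ) 1, X t - φ₁ t = D t := by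
    intro t ht
    rw [hX t ht, hφ₁ t ht]
    have h1 : IntervalIntegrable (fun s => σ (X s, Y s)) volume 0 t :=
      (hσc.comp (hXc.prodMk hYc)).intervalIntegrable 0 t
    have h2 : IntervalIntegrable (fun s => σ (φ₁ s, φ₂ s)) volume 0 t :=
      (hσc.comp (hφ₁c.prodMk hφ₂c)).intervalIntegrable 0 t
    simp only [hD_def, hg_def]
    rw [intervalIntegral.integral_sub h1 h2]
    ring
  -- bound on E
  have hEb : ∀ s ∈ Set.Icc (0:ℝ) 1, |Y s - φ₂ s| ≤ K := by
    intro s hs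
    have := hE 0 (by norm_num) s hs
    rw [hY0] at this
    simp only [sub_self, sub_zero] at this
    refine this.trans ?_
    have hb : |s - 0| ^ β ≤ 1 := by
      apply Real.rpow_le_one (abs_nonneg _)
      rw [sub_zero, abs_of_nonneg hs.1]; exact hs.2
      exact hβ.le
    rw [sub_zero] at hb
    have hp : (0:ℝ) ≤ |s| ^ β := Real.rpow_nonneg (abs_nonneg _) _
    nlinarith
  -- pointwise bound on g on [0,1]
  have hgb : ∀ s ∈ Set.Icc (0:ℝ) 1, |g s| ≤ L₁ * |D s| + L₁ * K := by
    intro s hs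
    have h1 := hσ (X s, Y s) (φ₁ s, φ₂ s)
    simp only [hg_def]
    refine h1.trans ?_
    have h2 := hEb s hs
    rw [← hDeq s hs]
    nlinarith [abs_nonneg (X s - φ₁ s)]
  -- derivative of D
  have hDd : ∀ t : ℝ, HasDerivAt D (g t) t := by
    intro t
    exact intervalIntegral.integral_hasDerivAt_right (hgc.intervalIntegrable 0 t)
      (hgc.stronglyMeasurableAtFilter _ _) hgc.continuousAt
  -- Gronwall
  have hgron : ∀ t ∈ Set.Icc (0:ℝ) 1, |D t| ≤ K * Real.exp L₁ := by
    have H := norm_le_gronwallBound_of_norm_deriv_right_le (a := 0) (b := 1)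
      (f := D) (f' := g) (δ := 0) (K := L₁) (ε := L₁ * K)
      (fun s _ => (hDd s).continuousAt.continuousWithinAt)
      (fun s hs => (hDd s).hasDerivWithinAt)
      (by simp [hD_def])
      (fun s hs => by
        have := hgb s (Set.Ico_subset_Icc_self hs)
        simpa [Real.norm_eq_abs] using this)
    intro t ht
    have := H t ht
    rw [Real.norm_eq_abs] at this
    refine this.trans ?_
    rcases eq_or_ne L₁ 0 with h0 | h0
    · subst h0
      simp [gronwallBound_K0]
      positivity
    · rw [gronwallBound_of_K_ne_0 h0]
      simp only [zero_mul, zero_add, sub_zero]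
      have hd : L₁ * K / L₁ = K := by field_simp
      rw [hd]
      have hexp : Real.exp (L₁ * t) ≤ Real.exp L₁ := by
        apply Real.exp_le_exp.2; nlinarith [ht.1, ht.2]
      have hexp1 : (1:ℝ) ≤ Real.exp (L₁ * t) := by
        rw [← Real.exp_zero]; apply Real.exp_le_exp.2
        have := ht.1; positivity
      nlinarith
  -- final estimate
  have hsub : Set.uIoc u v ⊆ Set.Icc (0:ℝ) 1 := by
    exact fun s hs => (Set.uIcc_subset_Icc hu hv) (Set.uIoc_subset_uIcc hs)
  have hint : |∫ s in u..v, g s| ≤ (L₁ * (K * Real.exp L₁) + L₁ * K) * |v - u| := by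
    have := intervalIntegral.norm_integral_le_of_norm_le_const
      (C := L₁ * (K * Real.exp L₁) + L₁ * K) (f := g) (a := u) (b := v) ?_
    · simpa [Real.norm_eq_abs] using this
    · intro s hs
      have hs' := hsub hs
      have := hgb s hs'
      have := hgron s hs'
      rw [Real.norm_eq_abs]
      nlinarith
  have hDdiff : D v - D u = ∫ s in u..v, g s := by
    simp only [hD_def]
    rw [← intervalIntegral.integral_interval_sub_left (hgc.intervalIntegrable 0 v)
      (hgc.intervalIntegrable 0 u)]
  rw [hDeq u hu, hDeq v hv]
  rcases eq_or_ne v u with h | h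
  · subst h; simp; positivity
  · have hvu : 0 < |v - u| := by
      rw [abs_pos]; exact sub_ne_zero_of_ne h
    have hvu1 : |v - u| ≤ 1 := by
      rw [abs_sub_le_iff]; constructor <;> [linarith [hv.2, hu.1]; linarith [hu.2, hv.1]]
    have hpow : |v - u| ≤ |v - u| ^ β := by
      calc |v - u| = |v - u| ^ (1:ℝ) := by rw [Real.rpow_one]
        _ ≤ |v - u| ^ β := Real.rpow_le_rpow_of_exponent_ge hvu hvu1 hβ1.le
    have hpow0 : 0 < |v - u| ^ β := Real.rpow_pos_of_pos hvu β
    calc |D v - D u| = |∫ s in u..v, g s| := by rw [hDdiff]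
      _ ≤ (L₁ * (K * Real.exp L₁) + L₁ * K) * |v - u| := hint
      _ ≤ (L₁ * (K * Real.exp L₁) + L₁ * K) * |v - u| ^ β := by
          apply mul_le_mul_of_nonneg_left hpow
          positivity
      _ ≤ (L₁ * (Real.exp L₁ + 1) + 1) * K * |v - u| ^ β := by
          have he : 0 < Real.exp L₁ := Real.exp_pos _
          nlinarith
end

section
/- Let 0 < α < 1/2 and suppose b_y: ℝ² → ℝ is bounded by M. Define f(s,r) = (1/Γ(α)) s^{-α} ∫_r^s u^α b_y(φ_u) (s-u)^{α-1} K^H(u,r) du · 𝟙_{s ≥ r} on (0,1]² with K^H the kernel of fractional Brownian motion of Hurst index H = 1/2 - α, and let f̃ be the symmetrization of f. Then the trace of the associated integral operator K(f̃) on L²([0,1]) equals ∫_0^1 f̃(s,s) ds = (d_H/2) ∫_0^1 b_y(φ_s) ds, where d_H = c_H Γ(1-α) and c_H = (2HΓ(3/2-H)/(Γ(H+1/2)Γ(2-2H)))^{1/2}. -/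
open MeasureTheory intervalIntegral Filter

namespace TraceSingularAux

lemma II_left {β : ℝ} (hβ : (-1:ℝ) < β) (c a b : ℝ) :
    IntervalIntegrable (fun u : ℝ => (u - c) ^ β) volume a b := by
  have h := (intervalIntegrable_rpow' (a := a - c) (b := b - c) hβ).comp_sub_right c
  simpa using h

lemma II_right {β : ℝ} (hβ : (-1:ℝ) < β) (c a b : ℝ) :
    IntervalIntegrable (fun u : ℝ => (c - u) ^ β) volume a b := by
  have h := (intervalIntegrable_rpow' (a := c - a) (b := c - b) hβ).comp_sub_left c
  simpa using h

lemma left_rpow_integral {α r u : ℝ} (h1 : α < 1) :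
    ∫ θ in r..u, (θ - r) ^ (-α) = (u - r) ^ (1 - α) / (1 - α) := by
  have h := intervalIntegral.integral_comp_sub_right (a := r) (b := u)
    (fun x : ℝ => x ^ (-α)) r
  rw [h, sub_self, integral_rpow (Or.inl (by linarith : (-1:ℝ) < -α)),
    Real.zero_rpow (by intro hc; linarith [hc] : -α + 1 ≠ 0)]
  rw [show -α + 1 = 1 - α by ring]
  ring

lemma right_rpow_integral {α r s : ℝ} (h0 : 0 < α) :
    ∫ u in r..s, (s - u) ^ (α - 1) = (s - r) ^ α / α := by
  have h := intervalIntegral.integral_comp_sub_left (a := r) (b := s)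
    (fun x : ℝ => x ^ (α - 1)) s
  rw [h, sub_self, integral_rpow (Or.inl (by linarith : (-1:ℝ) < α - 1)),
    Real.zero_rpow (by intro hc; linarith [hc] : α - 1 + 1 ≠ 0)]
  rw [show α - 1 + 1 = α by ring]
  ring

lemma beta_value {α : ℝ} (h0 : 0 < α) (h1 : α < 1) :
    ∫ t in (0:ℝ)..1, (1 - t) ^ (α - 1) * t ^ (-α) = Real.Gamma (1 - α) * Real.Gamma α := by
  have hu : 0 < Complex.re ((1 - α : ℝ) : ℂ) := by simpa using by linarith
  have hv : 0 < Complex.re ((α : ℝ) : ℂ) := by simpa using h0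
  have h := Complex.Gamma_mul_Gamma_eq_betaIntegral hu hv
  have hsum : ((1 - α : ℝ) : ℂ) + ((α : ℝ) : ℂ) = 1 := by push_cast; ring
  rw [hsum, Complex.Gamma_one, one_mul] at h
  have hbeta : Complex.betaIntegral ((1 - α : ℝ) : ℂ) ((α : ℝ) : ℂ)
      = ((∫ t in (0:ℝ)..1, (1 - t) ^ (α - 1) * t ^ (-α) : ℝ) : ℂ) := by
    rw [Complex.betaIntegral, ← intervalIntegral.integral_ofReal]
    apply intervalIntegral.integral_congr
    intro x hx
    rw [Set.uIcc_of_le (zero_le_one' ℝ)] at hx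
    obtain ⟨hx0, hx1⟩ := hx
    have e1 : (((1 - α : ℝ) : ℂ)) - 1 = ((-α : ℝ) : ℂ) := by push_cast; ring
    have e2 : ((α : ℝ) : ℂ) - 1 = ((α - 1 : ℝ) : ℂ) := by push_cast; ring
    have e3 : (1 : ℂ) - (x : ℂ) = ((1 - x : ℝ) : ℂ) := by push_cast; ring
    simp only []
    rw [e1, e2, e3, ← Complex.ofReal_cpow hx0,
      ← Complex.ofReal_cpow (by linarith : (0:ℝ) ≤ 1 - x)]
    push_cast
    ring
  rw [hbeta, Complex.Gamma_ofReal, Complex.Gamma_ofReal] at h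
  have := Complex.ofReal_inj.mp (by push_cast at h ⊢; exact h :
    ((Real.Gamma (1 - α) * Real.Gamma α : ℝ) : ℂ)
      = ((∫ t in (0:ℝ)..1, (1 - t) ^ (α - 1) * t ^ (-α) : ℝ) : ℂ))
  linarith [this]

lemma w_integrable {α r s : ℝ} (h0 : 0 < α) (h1 : α < 1) (hrs : r < s) :
    IntervalIntegrable (fun u : ℝ => (s - u) ^ (α - 1) * (u - r) ^ (-α)) volume r s := by
  set m : ℝ := (r + s) / 2 with hm
  have hrm : r < m := by rw [hm]; linarith
  have hms : m < s := by rw [hm]; linarith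
  have half1 : IntervalIntegrable (fun u : ℝ => (s - u) ^ (α - 1) * (u - r) ^ (-α)) volume r m := by
    rw [intervalIntegrable_iff_integrableOn_Ioc_of_le hrm.le,
      integrableOn_Ioc_iff_integrableOn_Ioo]
    apply Integrable.mono' (g := fun u : ℝ => (s - m) ^ (α - 1) * (u - r) ^ (-α))
    · have := ((II_left (by linarith : (-1:ℝ) < -α) r r m).const_mul ((s - m) ^ (α - 1)))
      rw [intervalIntegrable_iff_integrableOn_Ioc_of_le hrm.le,
        integrableOn_Ioc_iff_integrableOn_Ioo] at this
      exact this
    · refine (ContinuousOn.mul ?_ ?_).aestronglyMeasurable measurableSet_Ioo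
      · exact ContinuousOn.rpow_const (continuousOn_const.sub continuousOn_id)
          (fun x hx => Or.inl (by intro hc; have := hx.2; nlinarith [sub_eq_zero.mp hc]))
      · exact ContinuousOn.rpow_const (continuousOn_id.sub continuousOn_const)
          (fun x hx => Or.inl (by intro hc; have := hx.1; nlinarith [sub_eq_zero.mp hc]))
    · filter_upwards [ae_restrict_mem measurableSet_Ioo] with u hu
      obtain ⟨hu1, hu2⟩ := hu
      have hsu : 0 < s - u := by linarith
      have hur : 0 < u - r := by linarith
      have hb1 : (s - u) ^ (α - 1) ≤ (s - m) ^ (α - 1) :=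
        Real.rpow_le_rpow_of_nonpos (by linarith) (by linarith) (by linarith)
      rw [Real.norm_eq_abs, abs_of_nonneg (mul_nonneg (Real.rpow_nonneg hsu.le _)
        (Real.rpow_nonneg hur.le _))]
      exact mul_le_mul_of_nonneg_right hb1 (Real.rpow_nonneg hur.le _)
  have half2 : IntervalIntegrable (fun u : ℝ => (s - u) ^ (α - 1) * (u - r) ^ (-α)) volume m s := by
    rw [intervalIntegrable_iff_integrableOn_Ioc_of_le hms.le,
      integrableOn_Ioc_iff_integrableOn_Ioo]
    apply Integrable.mono' (g := fun u : ℝ => (m - r) ^ (-α) * (s - u) ^ (α - 1))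
    · have := ((II_right (by linarith : (-1:ℝ) < α - 1) s m s).const_mul ((m - r) ^ (-α)))
      rw [intervalIntegrable_iff_integrableOn_Ioc_of_le hms.le,
        integrableOn_Ioc_iff_integrableOn_Ioo] at this
      exact this
    · refine (ContinuousOn.mul ?_ ?_).aestronglyMeasurable measurableSet_Ioo
      · exact ContinuousOn.rpow_const (continuousOn_const.sub continuousOn_id)
          (fun x hx => Or.inl (by intro hc; have := hx.2; nlinarith [sub_eq_zero.mp hc]))
      · exact ContinuousOn.rpow_const (continuousOn_id.sub continuousOn_const)
          (fun x hx => Or.inl (by intro hc; have := hx.1; nlinarith [sub_eq_zero.mp hc]))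
    · filter_upwards [ae_restrict_mem measurableSet_Ioo] with u hu
      obtain ⟨hu1, hu2⟩ := hu
      have hsu : 0 < s - u := by linarith
      have hur : 0 < u - r := by linarith
      have hb1 : (u - r) ^ (-α) ≤ (m - r) ^ (-α) :=
        Real.rpow_le_rpow_of_nonpos (by linarith) (by linarith) (by linarith)
      rw [Real.norm_eq_abs, abs_of_nonneg (mul_nonneg (Real.rpow_nonneg hsu.le _)
        (Real.rpow_nonneg hur.le _))]
      calc (s - u) ^ (α - 1) * (u - r) ^ (-α)
          ≤ (s - u) ^ (α - 1) * (m - r) ^ (-α) :=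
            mul_le_mul_of_nonneg_left hb1 (Real.rpow_nonneg hsu.le _)
        _ = (m - r) ^ (-α) * (s - u) ^ (α - 1) := by ring
  exact half1.trans half2

lemma w_value {α r s : ℝ} (h0 : 0 < α) (h1 : α < 1) (hrs : r < s) :
    ∫ u in r..s, (s - u) ^ (α - 1) * (u - r) ^ (-α)
      = Real.Gamma (1 - α) * Real.Gamma α := by
  have hsr : 0 < s - r := by linarith
  have hc : s - r ≠ 0 := hsr.ne'
  have h := intervalIntegral.integral_comp_mul_add (a := (0:ℝ)) (b := 1)
    (f := fun u : ℝ => (s - u) ^ (α - 1) * (u - r) ^ (-α)) hc r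
  rw [show (s - r) * 0 + r = r by ring, show (s - r) * 1 + r = s by ring] at h
  have hcongr : ∫ x in (0:ℝ)..1, (s - ((s - r) * x + r)) ^ (α - 1) * ((s - r) * x + r - r) ^ (-α)
      = ∫ x in (0:ℝ)..1, ((s - r) ^ (α - 1) * (s - r) ^ (-α)) * ((1 - x) ^ (α - 1) * x ^ (-α)) := by
    apply intervalIntegral.integral_congr
    intro x hx
    rw [Set.uIcc_of_le (zero_le_one' ℝ)] at hx
    obtain ⟨hx0, hx1⟩ := hx
    have e1 : s - ((s - r) * x + r) = (s - r) * (1 - x) := by ring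
    have e2 : (s - r) * x + r - r = (s - r) * x := by ring
    dsimp only
    rw [e1, e2, Real.mul_rpow hsr.le (by linarith), Real.mul_rpow hsr.le hx0]
    ring
  rw [hcongr, intervalIntegral.integral_const_mul] at h
  rw [beta_value h0 h1, smul_eq_mul] at h
  have hfac : (s - r) * ((s - r) ^ (α - 1) * (s - r) ^ (-α)) = 1 := by
    rw [← Real.rpow_add hsr, show α - 1 + -α = -1 by ring, Real.rpow_neg_one]
    exact mul_inv_cancel₀ hc
  have hI : (s - r) * ((s - r) ^ (α - 1) * (s - r) ^ (-α) *
      (Real.Gamma (1 - α) * Real.Gamma α))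
      = ∫ u in r..s, (s - u) ^ (α - 1) * (u - r) ^ (-α) := by
    rw [h, ← mul_assoc, mul_inv_cancel₀ hc, one_mul]
  rw [show (s - r) * ((s - r) ^ (α - 1) * (s - r) ^ (-α) *
      (Real.Gamma (1 - α) * Real.Gamma α))
      = ((s - r) * ((s - r) ^ (α - 1) * (s - r) ^ (-α))) *
        (Real.Gamma (1 - α) * Real.Gamma α) by ring, hfac, one_mul] at hI
  exact hI.symm

lemma psi_bound {α r θ : ℝ} (h0 : 0 < α) (h1 : α < 1) (hr : 0 < r) (hθ : r < θ) :
    ‖(θ - r) ^ (-α - 1) * (1 - (r / θ) ^ α)‖ ≤ (θ - r) ^ (-α) * r⁻¹ := by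
  have hθ0 : 0 < θ := lt_trans hr hθ
  have htr : 0 < θ - r := by linarith
  have hx0 : 0 < r / θ := div_pos hr hθ0
  have hx1 : r / θ ≤ 1 := (div_le_one hθ0).mpr hθ.le
  have hle1 : (r / θ) ^ α ≤ 1 := Real.rpow_le_one hx0.le hx1 h0.le
  have hge : r / θ ≤ (r / θ) ^ α := by
    have := Real.rpow_le_rpow_of_exponent_ge hx0 hx1 (le_of_lt h1)
    rwa [Real.rpow_one] at this
  have hkey : 1 - (r / θ) ^ α ≤ (θ - r) * r⁻¹ := by
    have h2 : 1 - (r / θ) ^ α ≤ 1 - r / θ := by linarith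
    have h3 : 1 - r / θ = (θ - r) / θ := by field_simp
    have h4 : (θ - r) / θ ≤ (θ - r) / r := div_le_div_of_nonneg_left htr.le hr hθ.le
    calc 1 - (r / θ) ^ α ≤ (θ - r) / θ := by rw [← h3]; exact h2
      _ ≤ (θ - r) / r := h4
      _ = (θ - r) * r⁻¹ := by ring
  rw [Real.norm_eq_abs, abs_of_nonneg (mul_nonneg (Real.rpow_nonneg htr.le _)
    (by linarith))]
  calc (θ - r) ^ (-α - 1) * (1 - (r / θ) ^ α)
      ≤ (θ - r) ^ (-α - 1) * ((θ - r) * r⁻¹) :=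
        mul_le_mul_of_nonneg_left hkey (Real.rpow_nonneg htr.le _)
    _ = ((θ - r) ^ (-α - 1) * (θ - r)) * r⁻¹ := by ring
    _ = (θ - r) ^ (-α) * r⁻¹ := by
        rw [← Real.rpow_add_one htr.ne' (-α - 1), show -α - 1 + 1 = -α by ring]

lemma psi_integrable {α r s : ℝ} (h0 : 0 < α) (h1 : α < 1) (hr : 0 < r) (hrs : r ≤ s) :
    IntervalIntegrable (fun θ : ℝ => (θ - r) ^ (-α - 1) * (1 - (r / θ) ^ α)) volume r s := by
  apply IntervalIntegrable.mono_fun'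
    (g := fun θ : ℝ => (θ - r) ^ (-α) * r⁻¹)
  · exact (II_left (by linarith : (-1:ℝ) < -α) r r s).mul_const _
  · refine (ContinuousOn.mul ?_ ?_).aestronglyMeasurable measurableSet_uIoc
    · rw [Set.uIoc_of_le hrs]
      exact ContinuousOn.rpow_const (continuousOn_id.sub continuousOn_const)
        (fun x hx => Or.inl (by intro hc; have := hx.1; nlinarith [sub_eq_zero.mp hc]))
    · rw [Set.uIoc_of_le hrs]
      refine continuousOn_const.sub (ContinuousOn.rpow_const ?_ (fun x hx => Or.inr h0.le))
      exact continuousOn_const.div continuousOn_id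
        (fun x hx => by have := hx.1; intro hc; rw [hc] at this; linarith)
  · rw [Set.uIoc_of_le hrs]
    filter_upwards [ae_restrict_mem measurableSet_Ioc] with θ hθ
    exact psi_bound h0 h1 hr hθ.1

lemma J_bound {α r u : ℝ} (h0 : 0 < α) (h1 : α < 1) (hr : 0 < r) (hru : r ≤ u) :
    |∫ θ in r..u, (θ - r) ^ (-α - 1) * (1 - (r / θ) ^ α)|
      ≤ (u - r) ^ (1 - α) / ((1 - α) * r) := by
  have key : ‖∫ θ in r..u, (θ - r) ^ (-α - 1) * (1 - (r / θ) ^ α)‖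
      ≤ |∫ θ in r..u, (θ - r) ^ (-α) * r⁻¹| := by
    apply intervalIntegral.norm_integral_le_abs_of_norm_le
    · rw [Set.uIoc_of_le hru]
      filter_upwards [ae_restrict_mem measurableSet_Ioc] with θ hθ
      exact psi_bound h0 h1 hr hθ.1
    · exact (II_left (by linarith : (-1:ℝ) < -α) r r u).mul_const _
  rw [Real.norm_eq_abs] at key
  refine key.trans ?_
  rw [intervalIntegral.integral_mul_const, left_rpow_integral h1]
  rw [abs_of_nonneg (mul_nonneg (div_nonneg (Real.rpow_nonneg (by linarith) _)
    (by linarith)) (inv_nonneg.mpr hr.le))]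
  have h1a : (1 : ℝ) - α ≠ 0 := by intro hc; linarith [hc]
  rw [div_eq_mul_inv, div_eq_mul_inv, mul_inv, ← mul_assoc]

end TraceSingularAux

open TraceSingularAux

set_option maxHeartbeats 1600000

/-- Trace identity for the symmetrized kernel in the singular case
(`H = 1/2 - α`, `1/4 < H < 1/2`). The diagonal values of the
symmetrization `f̃` are given as limits `F s`, and the trace
`∫ f̃(s,s) ds` equals `(d_H/2) ∫ b_y(φ_s) ds`. -/
theorem trace_singular_case
    (H α cH dH M : ℝ) (hH : 1/4 < H) (hH2 : H < 1/2) (hα : α = 1/2 - H)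
    (hcH : cH = Real.sqrt (2 * H * Real.Gamma (3/2 - H) /
      (Real.Gamma (H + 1/2) * Real.Gamma (2 - 2 * H))))
    (hdH : dH = cH * Real.Gamma (1 - α))
    (φ : ℝ → ℝ × ℝ) (by' : ℝ × ℝ → ℝ)
    (hby : ∀ p, |by' p| ≤ M)
    (hbyc : Continuous fun u => by' (φ u))
    (K : ℝ → ℝ → ℝ)
    (hK : ∀ r u : ℝ, 0 < u → u ≤ r →
      K r u = cH * (r - u) ^ (H - 1/2) +
        cH * (1/2 - H) *
          ∫ θ in u..r, (θ - u) ^ (H - 3/2) * (1 - (u/θ) ^ (1/2 - H)))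
    (f : ℝ → ℝ → ℝ)
    (hf : ∀ s r : ℝ, f s r =
      (if r ≤ s then 1 else 0) * ((Real.Gamma α)⁻¹ * s ^ (-α) *
        ∫ u in r..s, u ^ α * by' (φ u) * (s - u) ^ (α - 1) * K u r))
    (ftil : ℝ → ℝ → ℝ)
    (hftil : ∀ s r, ftil s r = (f s r + f r s) / 2)
    (F : ℝ → ℝ)
    (hF : ∀ s ∈ Set.Ioc (0:ℝ) 1,
      Tendsto (fun r => ftil s r) (nhdsWithin s (Set.Ioo 0 s)) (nhds (F s))) :
    ∫ s in (0:ℝ)..1, F s = (dH / 2) * ∫ s in (0:ℝ)..1, by' (φ s) := by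
  have hα0 : 0 < α := by rw [hα]; linarith
  have hα1 : α < 1 := by rw [hα]; linarith
  have hcH0 : 0 ≤ cH := by rw [hcH]; exact Real.sqrt_nonneg _
  have hM0 : 0 ≤ M := le_trans (abs_nonneg _) (hby (φ 0))
  have hΓα : 0 < Real.Gamma α := Real.Gamma_pos_of_pos hα0
  have hΓ1α : 0 < Real.Gamma (1 - α) := Real.Gamma_pos_of_pos (by linarith)
  have hK' : ∀ u r : ℝ, 0 < r → r ≤ u → K u r = cH * (u - r) ^ (-α) +
      cH * α * ∫ θ in r..u, (θ - r) ^ (-α - 1) * (1 - (r / θ) ^ α) := by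
    intro u r h h'
    have e1 : H - 1/2 = -α := by rw [hα]; ring
    have e2 : H - 3/2 = -α - 1 := by rw [hα]; ring
    have e3 : 1/2 - H = α := hα.symm
    rw [hK u r h h']
    simp only [e1, e2, e3]
  have hgcont : Continuous (fun u : ℝ => u ^ α * by' (φ u)) :=
    (continuous_id.rpow_const (fun x => Or.inr hα0.le)).mul hbyc
  have key : ∀ s ∈ Set.Ioc (0:ℝ) 1, F s = dH / 2 * by' (φ s) := by
    intro s hsmem
    obtain ⟨hs0, hs1⟩ := hsmem
    have hne : (nhdsWithin s (Set.Ioo 0 s)).NeBot := by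
      apply mem_closure_iff_nhdsWithin_neBot.mp
      rw [closure_Ioo hs0.ne]
      exact ⟨hs0.le, le_refl s⟩
    refine tendsto_nhds_unique (hF s ⟨hs0, hs1⟩) ?_
    rw [Metric.tendsto_nhdsWithin_nhds]
    intro ε hε
    have hsa : 0 < s ^ α := Real.rpow_pos_of_pos hs0 α
    have hsna : 0 < s ^ (-α) := Real.rpow_pos_of_pos hs0 (-α)
    obtain ⟨Q₁, hQ₁⟩ : ∃ x : ℝ, x = (Real.Gamma α)⁻¹ * s ^ (-α) * cH *
        (Real.Gamma (1 - α) * Real.Gamma α) := ⟨_, rfl⟩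
    obtain ⟨Q₂, hQ₂⟩ : ∃ x : ℝ, x = (Real.Gamma α)⁻¹ * s ^ (-α) *
        (cH * (s ^ α * M) * 2 / ((1 - α) * s)) := ⟨_, rfl⟩
    have hQ₁0 : 0 ≤ Q₁ := by
      rw [hQ₁]
      exact mul_nonneg (mul_nonneg (mul_nonneg (inv_nonneg.mpr hΓα.le) hsna.le) hcH0)
        (mul_pos hΓ1α hΓα).le
    have hQ₂0 : 0 ≤ Q₂ := by
      rw [hQ₂]
      exact mul_nonneg (mul_nonneg (inv_nonneg.mpr hΓα.le) hsna.le)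
        (div_nonneg (mul_nonneg (mul_nonneg hcH0 (mul_nonneg hsa.le hM0)) (by norm_num))
          (mul_nonneg (by linarith) hs0.le))
    obtain ⟨ε', hε'def⟩ : ∃ x : ℝ, x = ε / (2 * (Q₁ + 1)) := ⟨_, rfl⟩
    have hε'pos : 0 < ε' := by rw [hε'def]; exact div_pos hε (by linarith)
    obtain ⟨δ₂, hδ₂def⟩ : ∃ x : ℝ, x = ε / (2 * (Q₂ + 1)) := ⟨_, rfl⟩
    have hδ₂pos : 0 < δ₂ := by rw [hδ₂def]; exact div_pos hε (by linarith)
    obtain ⟨δ₁, hδ₁pos, hδ₁⟩ := Metric.continuousAt_iff.mp hgcont.continuousAt ε' hε'pos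
    refine ⟨min δ₁ (min (s/2) δ₂), lt_min hδ₁pos (lt_min (by linarith) hδ₂pos), ?_⟩
    intro r hrmem hrdist
    obtain ⟨hr0, hrs⟩ := hrmem
    rw [Real.dist_eq, abs_sub_comm, abs_of_pos (by linarith : (0:ℝ) < s - r)] at hrdist
    have hd1 : s - r < δ₁ := lt_of_lt_of_le hrdist (min_le_left _ _)
    have hd2 : s - r < s/2 := lt_of_lt_of_le hrdist ((min_le_right _ _).trans (min_le_left _ _))
    have hd3 : s - r < δ₂ := lt_of_lt_of_le hrdist ((min_le_right _ _).trans (min_le_right _ _))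
    have hsr0 : 0 < s - r := by linarith
    -- integrability facts
    have hψInt : IntervalIntegrable
        (fun θ : ℝ => (θ - r) ^ (-α - 1) * (1 - (r / θ) ^ α)) volume r s :=
      psi_integrable hα0 hα1 hr0 hrs.le
    have hJcont : ContinuousOn
        (fun u : ℝ => ∫ θ in r..u, (θ - r) ^ (-α - 1) * (1 - (r / θ) ^ α))
        (Set.uIcc r s) :=
      intervalIntegral.continuousOn_primitive_interval' hψInt Set.left_mem_uIcc
    have hwInt : IntervalIntegrable
        (fun u : ℝ => (s - u) ^ (α - 1) * (u - r) ^ (-α)) volume r s :=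
      w_integrable hα0 hα1 hrs
    have hTInt : IntervalIntegrable (fun u : ℝ => (cH * (s ^ α * by' (φ s))) *
        ((s - u) ^ (α - 1) * (u - r) ^ (-α))) volume r s := hwInt.const_mul _
    have hA1Int : IntervalIntegrable (fun u : ℝ => (cH * (u ^ α * by' (φ u))) *
        ((s - u) ^ (α - 1) * (u - r) ^ (-α))) volume r s :=
      hwInt.continuousOn_mul (continuousOn_const.mul hgcont.continuousOn)
    have hA2Int : IntervalIntegrable (fun u : ℝ =>
        (cH * α * ((u ^ α * by' (φ u)) *
          (∫ θ in r..u, (θ - r) ^ (-α - 1) * (1 - (r / θ) ^ α)))) * (s - u) ^ (α - 1))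
        volume r s :=
      (II_right (by linarith : (-1:ℝ) < α - 1) s r s).continuousOn_mul
        (continuousOn_const.mul (hgcont.continuousOn.mul hJcont))
    have hEq : Set.EqOn
        (fun u : ℝ => (cH * (u ^ α * by' (φ u))) * ((s - u) ^ (α - 1) * (u - r) ^ (-α))
          + (cH * α * ((u ^ α * by' (φ u)) *
              (∫ θ in r..u, (θ - r) ^ (-α - 1) * (1 - (r / θ) ^ α)))) * (s - u) ^ (α - 1))
        (fun u : ℝ => u ^ α * by' (φ u) * (s - u) ^ (α - 1) * K u r)
        (Set.Ioc r s) := by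
      intro u hu
      dsimp only
      rw [hK' u r hr0 hu.1.le]
      ring
    have hIInt : IntervalIntegrable
        (fun u : ℝ => u ^ α * by' (φ u) * (s - u) ^ (α - 1) * K u r) volume r s := by
      rw [intervalIntegrable_iff_integrableOn_Ioc_of_le hrs.le]
      have h2 := hA1Int.add hA2Int
      rw [intervalIntegrable_iff_integrableOn_Ioc_of_le hrs.le] at h2
      exact h2.congr_fun hEq measurableSet_Ioc
    have hTval : ∫ u in r..s, (cH * (s ^ α * by' (φ s))) *
        ((s - u) ^ (α - 1) * (u - r) ^ (-α))
        = cH * (s ^ α * by' (φ s)) * (Real.Gamma (1 - α) * Real.Gamma α) := by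
      rw [intervalIntegral.integral_const_mul, w_value hα0 hα1 hrs]
    have hC₂0 : 0 ≤ cH * α * (s ^ α * M) * ((s - r) ^ (1 - α) / ((1 - α) * r)) :=
      mul_nonneg (mul_nonneg (mul_nonneg hcH0 hα0.le) (mul_nonneg hsa.le hM0))
        (div_nonneg (Real.rpow_nonneg hsr0.le _) (mul_nonneg (by linarith) hr0.le))
    have hboundInt : IntervalIntegrable (fun u : ℝ =>
        cH * ε' * ((s - u) ^ (α - 1) * (u - r) ^ (-α)) +
          (cH * α * (s ^ α * M) * ((s - r) ^ (1 - α) / ((1 - α) * r))) * (s - u) ^ (α - 1))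
        volume r s :=
      (hwInt.const_mul _).add
        ((II_right (by linarith : (-1:ℝ) < α - 1) s r s).const_mul _)
    -- pointwise bound
    have hptwise : ∀ u ∈ Set.Ioc r s,
        ‖(u ^ α * by' (φ u) * (s - u) ^ (α - 1) * K u r)
          - (cH * (s ^ α * by' (φ s))) * ((s - u) ^ (α - 1) * (u - r) ^ (-α))‖
        ≤ cH * ε' * ((s - u) ^ (α - 1) * (u - r) ^ (-α)) +
            (cH * α * (s ^ α * M) * ((s - r) ^ (1 - α) / ((1 - α) * r))) * (s - u) ^ (α - 1) := by
      intro u hu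
      obtain ⟨hur, hus⟩ := hu
      have hu0 : 0 < u := lt_trans hr0 hur
      have hw1 : (0:ℝ) ≤ (s - u) ^ (α - 1) := Real.rpow_nonneg (by linarith) _
      have hw2 : (0:ℝ) ≤ (u - r) ^ (-α) := Real.rpow_nonneg (by linarith) _
      have hgdiff : |u ^ α * by' (φ u) - s ^ α * by' (φ s)| ≤ ε' := by
        have hdu : dist u s < δ₁ := by
          rw [Real.dist_eq, abs_of_nonpos (by linarith)]
          linarith
        have h2 := hδ₁ hdu
        rw [Real.dist_eq] at h2
        exact le_of_lt h2
      have hgu : |u ^ α * by' (φ u)| ≤ s ^ α * M := by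
        rw [abs_mul, abs_of_nonneg (Real.rpow_nonneg hu0.le α)]
        exact mul_le_mul (Real.rpow_le_rpow hu0.le hus hα0.le) (hby _) (abs_nonneg _) hsa.le
      have hJle : |∫ θ in r..u, (θ - r) ^ (-α - 1) * (1 - (r / θ) ^ α)|
          ≤ (s - r) ^ (1 - α) / ((1 - α) * r) := by
        refine (J_bound hα0 hα1 hr0 hur.le).trans ?_
        have hpos : 0 < (1 - α) * r := mul_pos (by linarith) hr0
        exact (div_le_div_iff_of_pos_right hpos).mpr
          (Real.rpow_le_rpow (by linarith) (by linarith) (by linarith))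
      have hsplit : (u ^ α * by' (φ u) * (s - u) ^ (α - 1) * K u r)
          - (cH * (s ^ α * by' (φ s))) * ((s - u) ^ (α - 1) * (u - r) ^ (-α))
          = cH * (u ^ α * by' (φ u) - s ^ α * by' (φ s)) *
              ((s - u) ^ (α - 1) * (u - r) ^ (-α))
            + cH * α * (u ^ α * by' (φ u)) * ((s - u) ^ (α - 1) *
                (∫ θ in r..u, (θ - r) ^ (-α - 1) * (1 - (r / θ) ^ α))) := by
        rw [hK' u r hr0 hur.le]
        ring
      rw [hsplit, Real.norm_eq_abs]
      refine (abs_add_le _ _).trans ?_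
      have ht1 : |cH * (u ^ α * by' (φ u) - s ^ α * by' (φ s)) *
            ((s - u) ^ (α - 1) * (u - r) ^ (-α))|
          ≤ cH * ε' * ((s - u) ^ (α - 1) * (u - r) ^ (-α)) := by
        rw [abs_mul, abs_mul, abs_of_nonneg hcH0, abs_of_nonneg (mul_nonneg hw1 hw2)]
        exact mul_le_mul_of_nonneg_right (mul_le_mul_of_nonneg_left hgdiff hcH0)
          (mul_nonneg hw1 hw2)
      have ht2 : |cH * α * (u ^ α * by' (φ u)) * ((s - u) ^ (α - 1) *
            (∫ θ in r..u, (θ - r) ^ (-α - 1) * (1 - (r / θ) ^ α)))|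
          ≤ (cH * α * (s ^ α * M) * ((s - r) ^ (1 - α) / ((1 - α) * r))) *
            (s - u) ^ (α - 1) := by
        have habsval : |cH * α * (u ^ α * by' (φ u)) * ((s - u) ^ (α - 1) *
              (∫ θ in r..u, (θ - r) ^ (-α - 1) * (1 - (r / θ) ^ α)))|
            = cH * α * |u ^ α * by' (φ u)| * ((s - u) ^ (α - 1) *
              |∫ θ in r..u, (θ - r) ^ (-α - 1) * (1 - (r / θ) ^ α)|) := by
          simp only [abs_mul, abs_of_nonneg hcH0, abs_of_nonneg hα0.le,
            abs_of_nonneg hw1]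
        rw [habsval]
        have hstep : cH * α * |u ^ α * by' (φ u)| * ((s - u) ^ (α - 1) *
              |∫ θ in r..u, (θ - r) ^ (-α - 1) * (1 - (r / θ) ^ α)|)
            ≤ cH * α * (s ^ α * M) * ((s - u) ^ (α - 1) *
              ((s - r) ^ (1 - α) / ((1 - α) * r))) := by
          apply mul_le_mul (mul_le_mul_of_nonneg_left hgu (mul_nonneg hcH0 hα0.le))
            (mul_le_mul_of_nonneg_left hJle hw1)
            (mul_nonneg hw1 (abs_nonneg _))
            (mul_nonneg (mul_nonneg hcH0 hα0.le) (mul_nonneg hsa.le hM0))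
        refine hstep.trans (le_of_eq ?_)
        ring
      linarith [ht1, ht2]
    -- the main integral estimate
    have hIbound : ‖(∫ u in r..s, u ^ α * by' (φ u) * (s - u) ^ (α - 1) * K u r)
          - cH * (s ^ α * by' (φ s)) * (Real.Gamma (1 - α) * Real.Gamma α)‖
        ≤ cH * ε' * (Real.Gamma (1 - α) * Real.Gamma α) +
            (cH * α * (s ^ α * M) * ((s - r) ^ (1 - α) / ((1 - α) * r))) *
              ((s - r) ^ α / α) := by
      rw [← hTval, ← intervalIntegral.integral_sub hIInt hTInt]
      refine (intervalIntegral.norm_integral_le_abs_of_norm_le ?_ hboundInt).trans ?_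
      · rw [Set.uIoc_of_le hrs.le]
        filter_upwards [ae_restrict_mem measurableSet_Ioc] with u hu
        exact hptwise u hu
      · rw [intervalIntegral.integral_add (hwInt.const_mul _)
          ((II_right (by linarith : (-1:ℝ) < α - 1) s r s).const_mul _),
          intervalIntegral.integral_const_mul, intervalIntegral.integral_const_mul,
          w_value hα0 hα1 hrs, right_rpow_integral hα0]
        rw [abs_of_nonneg (add_nonneg
          (mul_nonneg (mul_nonneg hcH0 hε'pos.le) (mul_pos hΓ1α hΓα).le)
          (mul_nonneg hC₂0 (div_nonneg (Real.rpow_nonneg hsr0.le _) hα0.le)))]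
    -- simplify second term
    have hpow1 : (s - r) ^ (1 - α) * (s - r) ^ α = s - r := by
      rw [← Real.rpow_add hsr0, show 1 - α + α = (1:ℝ) by ring, Real.rpow_one]
    have hC₂val : (cH * α * (s ^ α * M) * ((s - r) ^ (1 - α) / ((1 - α) * r))) *
          ((s - r) ^ α / α)
        = cH * (s ^ α * M) * (s - r) / ((1 - α) * r) := by
      have h1 : (cH * α * (s ^ α * M) * ((s - r) ^ (1 - α) / ((1 - α) * r))) *
            ((s - r) ^ α / α)
          = (cH * (s ^ α * M) / ((1 - α) * r)) *
              ((s - r) ^ (1 - α) * (s - r) ^ α) * (α * α⁻¹) := by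
        ring
      rw [h1, hpow1, mul_inv_cancel₀ hα0.ne', mul_one]
      ring
    have hstep2 : cH * (s ^ α * M) * (s - r) / ((1 - α) * r)
        ≤ cH * (s ^ α * M) * (s - r) * 2 / ((1 - α) * s) := by
      rw [div_le_div_iff₀ (mul_pos (by linarith) hr0) (mul_pos (by linarith) hs0)]
      have hA : 0 ≤ cH * (s ^ α * M) * (s - r) * (1 - α) :=
        mul_nonneg (mul_nonneg (mul_nonneg hcH0 (mul_nonneg hsa.le hM0)) hsr0.le)
          (by linarith)
      nlinarith [mul_nonneg hA (show (0:ℝ) ≤ 2 * r - s by linarith)]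
    -- the difference formula
    have hfsr : f s r = (Real.Gamma α)⁻¹ * s ^ (-α) *
        ∫ u in r..s, u ^ α * by' (φ u) * (s - u) ^ (α - 1) * K u r := by
      rw [hf s r, if_pos hrs.le, one_mul]
    have htarget : (Real.Gamma α)⁻¹ * s ^ (-α) *
        (cH * (s ^ α * by' (φ s)) * (Real.Gamma (1 - α) * Real.Gamma α))
        = dH * by' (φ s) := by
      rw [hdH]
      have h1 : s ^ (-α) * s ^ α = 1 := by
        rw [← Real.rpow_add hs0, show -α + α = (0:ℝ) by ring, Real.rpow_zero]
      have h2 : (Real.Gamma α)⁻¹ * Real.Gamma α = 1 := inv_mul_cancel₀ hΓα.ne'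
      calc (Real.Gamma α)⁻¹ * s ^ (-α) *
            (cH * (s ^ α * by' (φ s)) * (Real.Gamma (1 - α) * Real.Gamma α))
          = (s ^ (-α) * s ^ α) * ((Real.Gamma α)⁻¹ * Real.Gamma α) *
              (cH * Real.Gamma (1 - α) * by' (φ s)) := by ring
        _ = cH * Real.Gamma (1 - α) * by' (φ s) := by rw [h1, h2]; ring
    have hdiff : f s r - dH * by' (φ s) = (Real.Gamma α)⁻¹ * s ^ (-α) *
        ((∫ u in r..s, u ^ α * by' (φ u) * (s - u) ^ (α - 1) * K u r)
          - cH * (s ^ α * by' (φ s)) * (Real.Gamma (1 - α) * Real.Gamma α)) := by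
      rw [hfsr, mul_sub, htarget]
    have hpref0 : 0 ≤ (Real.Gamma α)⁻¹ * s ^ (-α) :=
      mul_nonneg (inv_nonneg.mpr hΓα.le) hsna.le
    have habs2 : |f s r - dH * by' (φ s)| ≤ (Real.Gamma α)⁻¹ * s ^ (-α) *
        (cH * ε' * (Real.Gamma (1 - α) * Real.Gamma α) +
          (cH * α * (s ^ α * M) * ((s - r) ^ (1 - α) / ((1 - α) * r))) *
            ((s - r) ^ α / α)) := by
      rw [hdiff, abs_mul, abs_of_nonneg hpref0]
      refine mul_le_mul_of_nonneg_left ?_ hpref0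
      rw [← Real.norm_eq_abs]
      exact hIbound
    have hchain : |f s r - dH * by' (φ s)| ≤ Q₁ * ε' + Q₂ * (s - r) := by
      refine habs2.trans ?_
      rw [mul_add]
      apply add_le_add
      · rw [hQ₁]; exact le_of_eq (by ring)
      · rw [hC₂val]
        refine (mul_le_mul_of_nonneg_left hstep2 hpref0).trans (le_of_eq ?_)
        rw [hQ₂]
        ring
    -- numeric conclusion
    have hlt1 : Q₁ * ε' < ε / 2 := by
      have hεeq : ε / 2 = ε' * (Q₁ + 1) := by
        rw [hε'def]
        field_simp
      calc Q₁ * ε' < Q₁ * ε' + ε' := by linarith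
        _ = ε' * (Q₁ + 1) := by ring
        _ = ε / 2 := hεeq.symm
    have hlt2 : Q₂ * (s - r) < ε / 2 := by
      have hεeq : ε / 2 = δ₂ * (Q₂ + 1) := by
        rw [hδ₂def]
        field_simp
      calc Q₂ * (s - r) ≤ Q₂ * δ₂ := mul_le_mul_of_nonneg_left hd3.le hQ₂0
        _ < Q₂ * δ₂ + δ₂ := by linarith
        _ = δ₂ * (Q₂ + 1) := by ring
        _ = ε / 2 := hεeq.symm
    have hfrs : f r s = 0 := by
      rw [hf r s, if_neg (not_le.mpr hrs), zero_mul]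
    have hftilval : ftil s r = f s r / 2 := by
      rw [hftil, hfrs, add_zero]
    rw [Real.dist_eq, hftilval,
      show f s r / 2 - dH / 2 * by' (φ s) = (f s r - dH * by' (φ s)) / 2 by ring,
      abs_div, abs_two]
    have habsnn : 0 ≤ |f s r - dH * by' (φ s)| := abs_nonneg _
    linarith [hchain, hlt1, hlt2]
  -- conclude the integral identity
  rw [intervalIntegral.integral_of_le (zero_le_one' ℝ),
    intervalIntegral.integral_of_le (zero_le_one' ℝ), ← MeasureTheory.integral_const_mul]
  exact setIntegral_congr_fun measurableSet_Ioc (fun x hx => key x hx)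
end

section
/- Let 0 < α < 1 and K^H(s,r) = c_H α r^{-α} ∫_r^s (θ-r)^{α-1} θ^α dθ for 0 < r ≤ s ≤ 1. Let g: [0,1] → ℝ be continuous. Then f₃₃(s,r) := (α s^α / Γ(1-α)) ∫_r^s ((K^H(s,r) - K^H(u,r))/(s-u)^{α+1}) u^{-α} g(u) du has diagonal limit f₃₃(s,s) := lim_{r→s⁻} f₃₃(s,r) = c_H Γ(1+α) g(s) - (c_H/Γ(1-α)) g(s). -/
open MeasureTheory intervalIntegral Filter
open Set


theorem beta_real (α : ℝ) (hα : 0 < α) (hα1 : α < 1) :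
    ∫ x in (0:ℝ)..1, x ^ (α - 1) * (1 - x) ^ (-α) = Real.Gamma α * Real.Gamma (1 - α) := by
  have h1 : (0:ℝ) < 1 - α := by linarith
  have hc := Complex.Gamma_mul_Gamma_eq_betaIntegral (s := (α:ℂ)) (t := ((1 - α : ℝ) : ℂ))
    (by simpa using hα) (by simpa using h1)
  have hsum : (α:ℂ) + ((1-α:ℝ):ℂ) = 1 := by push_cast; ring
  rw [hsum, Complex.Gamma_one, one_mul] at hc
  have hβ : Complex.betaIntegral (α:ℂ) ((1-α:ℝ):ℂ)
      = ((∫ x in (0:ℝ)..1, x ^ (α - 1) * (1 - x) ^ (-α) : ℝ) : ℂ) := by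
    rw [Complex.betaIntegral, ← intervalIntegral.integral_ofReal]
    apply intervalIntegral.integral_congr
    intro x hx
    rw [Set.uIcc_of_le (by norm_num : (0:ℝ) ≤ 1)] at hx
    have h2 : (0:ℝ) ≤ 1 - x := by linarith [hx.2]
    dsimp only
    rw [show ((α:ℂ) - 1) = ((α - 1 : ℝ) : ℂ) by push_cast; ring,
        show ((1-α:ℝ):ℂ) - 1 = ((-α : ℝ) : ℂ) by push_cast; ring,
        show (1 - (x:ℂ)) = ((1 - x : ℝ) : ℂ) by push_cast; ring,
        ← Complex.ofReal_cpow hx.1, ← Complex.ofReal_cpow h2]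
    norm_cast
  rw [hβ, Complex.Gamma_ofReal, Complex.Gamma_ofReal, ← Complex.ofReal_mul] at hc
  exact_mod_cast hc.symm

-- (1-x)^(-α) interval integrable on [0,1]
theorem int_one_sub (α : ℝ) (hα1 : α < 1) :
    IntervalIntegrable (fun x : ℝ => (1 - x) ^ (-α)) volume 0 1 := by
  have h := (intervalIntegrable_rpow' (a := 0) (b := 1) (r := -α) (by linarith)).comp_sub_left 1
  simpa using h.symm

theorem integrableOn_one_sub (α : ℝ) (hα1 : α < 1) :
    IntegrableOn (fun x : ℝ => (1 - x) ^ (-α)) (Ioc 0 1) volume := by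
  have := (int_one_sub α hα1).def'
  simpa [uIoc_of_le (by norm_num : (0:ℝ) ≤ 1)] using this

-- beta integrand integrable
theorem int_beta (α : ℝ) (hα : 0 < α) (hα1 : α < 1) :
    IntervalIntegrable (fun x : ℝ => x ^ (α - 1) * (1 - x) ^ (-α)) volume 0 1 := by
  have h1 : IntervalIntegrable (fun x : ℝ => x ^ (α - 1) * (1 - x) ^ (-α)) volume 0 (1/2) := by
    apply (intervalIntegrable_rpow' (by linarith)).mul_continuousOn
    apply ContinuousOn.rpow_const
    · fun_prop
    · intro x hx
      rw [uIcc_of_le (by norm_num : (0:ℝ) ≤ 1/2)] at hx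
      left; intro h; have := hx.2; rw [sub_eq_zero] at h; linarith [hx.2]
  have h2 : IntervalIntegrable (fun x : ℝ => x ^ (α - 1) * (1 - x) ^ (-α)) volume (1/2) 1 := by
    apply IntervalIntegrable.continuousOn_mul
    · have := (intervalIntegrable_rpow' (a := 0) (b := 1/2) (r := -α) (by linarith)).comp_sub_left 1
      norm_num at this
      exact this.symm
    · apply ContinuousOn.rpow_const
      · fun_prop
      · intro x hx
        rw [uIcc_of_le (by norm_num : (1/2:ℝ) ≤ 1)] at hx
        left; exact (by linarith [hx.1] : (0:ℝ) < x).ne'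
  exact h1.trans h2

-- φ integrable with bound
theorem phi_bound (α : ℝ) (hα : 0 < α) (hα1 : α < 1) {n : ℝ} (hn : n ∈ Ioc (0:ℝ) 1) :
    0 ≤ (1 - n ^ α) * (1 - n) ^ (-α - 1) ∧
    (1 - n ^ α) * (1 - n) ^ (-α - 1) ≤ (1 - n) ^ (-α) := by
  rcases eq_or_lt_of_le hn.2 with h1 | h1
  · subst h1; simp [Real.one_rpow, Real.zero_rpow (by linarith : -α ≠ 0)]
  have hn0 : 0 < n := hn.1
  have h1n : 0 < 1 - n := by linarith
  have hle1 : n ^ α ≤ 1 := Real.rpow_le_one hn0.le hn.2 hα.le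
  have hge : n ≤ n ^ α := by
    calc n = n ^ (1:ℝ) := (Real.rpow_one n).symm
    _ ≤ n ^ α := Real.rpow_le_rpow_of_exponent_ge hn0 hn.2 hα1.le
  have e1 : (1 - n) * (1 - n) ^ (-α - 1) = (1 - n) ^ (-α) := by
    have h2 := Real.rpow_add h1n 1 (-α-1)
    rw [Real.rpow_one] at h2
    rw [← h2]; congr 1; ring
  constructor
  · exact mul_nonneg (by linarith) (Real.rpow_nonneg h1n.le _)
  · rw [← e1]
    exact mul_le_mul_of_nonneg_right (by linarith) (Real.rpow_nonneg h1n.le _)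

theorem integrableOn_phi (α : ℝ) (hα : 0 < α) (hα1 : α < 1) :
    IntegrableOn (fun n : ℝ => (1 - n ^ α) * (1 - n) ^ (-α - 1)) (Ioc 0 1) volume := by
  apply Integrable.mono' (integrableOn_one_sub α hα1)
  · apply Measurable.aestronglyMeasurable
    fun_prop
  · rw [ae_restrict_iff' measurableSet_Ioc]
    filter_upwards with n hn
    rw [Real.norm_eq_abs, abs_of_nonneg (phi_bound α hα hα1 hn).1]
    exact (phi_bound α hα hα1 hn).2

theorem int_phi (α : ℝ) (hα : 0 < α) (hα1 : α < 1) :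
    IntervalIntegrable (fun n : ℝ => (1 - n ^ α) * (1 - n) ^ (-α - 1)) volume 0 1 := by
  rw [intervalIntegrable_iff, uIoc_of_le (by norm_num : (0:ℝ) ≤ 1)]
  exact integrableOn_phi α hα hα1

theorem J_val (α : ℝ) (hα : 0 < α) (hα1 : α < 1) :
    ∫ n in (0:ℝ)..1, (1 - n ^ α) * (1 - n) ^ (-α - 1)
      = Real.Gamma α * Real.Gamma (1 - α) - 1 / α := by
  set W : ℝ → ℝ := fun n => (1 - n ^ α) * (1 - n) ^ (-α) / α with hW
  set f' : ℝ → ℝ := fun n => (1 - n ^ α) * (1 - n) ^ (-α - 1) - n ^ (α - 1) * (1 - n) ^ (-α)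
    with hf'
  have hderiv : ∀ n ∈ Ioo (0:ℝ) 1, HasDerivAt W (f' n) n := by
    intro n hn
    have h1n : (0:ℝ) < 1 - n := by linarith [hn.2]
    have hu : HasDerivAt (fun n : ℝ => 1 - n ^ α) (-(α * n ^ (α - 1))) n := by
      simpa using (Real.hasDerivAt_rpow_const (p := α) (Or.inl hn.1.ne')).const_sub 1
    have hv := ((hasDerivAt_id n).const_sub 1).rpow_const (p := -α) (Or.inl h1n.ne')
    simp only [id_eq] at hv
    have : HasDerivAt W (((-(α * n ^ (α - 1))) * (1 - n) ^ (-α) + (1 - n ^ α) * (-1 * -α * (1 - n) ^ (-α - 1))) / α) n :=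
      ((hu.mul hv).div_const α)
    convert this using 1
    simp only [hf']
    field_simp
    ring
  have hint : IntervalIntegrable f' volume 0 1 :=
    (int_phi α hα hα1).sub (int_beta α hα hα1)
  have ha : Tendsto W (nhdsWithin 0 (Ioi 0)) (nhds (1 / α)) := by
    have hc : ContinuousAt W 0 := by
      apply ContinuousAt.div_const
      apply ContinuousAt.mul
      · exact (continuousAt_const.sub (Real.continuousAt_rpow_const 0 α (Or.inr hα.le)))
      · exact ((continuous_const.sub continuous_id).continuousAt).rpow_const
          (by norm_num : (1:ℝ) - 0 ≠ 0 ∨ 0 ≤ -α)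
    have h0 : W 0 = 1 / α := by
      simp [hW, Real.zero_rpow hα.ne', Real.one_rpow]
    rw [← h0]
    exact hc.continuousWithinAt.tendsto
  have hb : Tendsto W (nhdsWithin 1 (Iio 1)) (nhds 0) := by
    have hupper : Tendsto (fun n : ℝ => (1 - n) ^ (1 - α) / α) (nhdsWithin 1 (Iio 1)) (nhds 0) := by
      have hc : ContinuousAt (fun n : ℝ => (1 - n) ^ (1 - α) / α) 1 := by
        apply ContinuousAt.div_const
        exact ((continuous_const.sub continuous_id).continuousAt).rpow_const
          (Or.inr (by linarith : (0:ℝ) ≤ 1 - α))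
      have h0 : (fun n : ℝ => (1 - n) ^ (1 - α) / α) 1 = 0 := by
        simp [Real.zero_rpow (by linarith : (1:ℝ) - α ≠ 0)]
      rw [← h0]
      exact hc.continuousWithinAt.tendsto
    apply tendsto_of_tendsto_of_tendsto_of_le_of_le' tendsto_const_nhds hupper
    · filter_upwards [Ioo_mem_nhdsLT_of_mem (by constructor <;> norm_num : (1:ℝ) ∈ Ioc 0 1)]
        with n hn
      have h1n : (0:ℝ) < 1 - n := by linarith [hn.2]
      have hle1 : n ^ α ≤ 1 := Real.rpow_le_one hn.1.le hn.2.le hα.le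
      simp only [hW]
      exact div_nonneg (mul_nonneg (by linarith) (Real.rpow_nonneg h1n.le _)) hα.le
    · filter_upwards [Ioo_mem_nhdsLT_of_mem (by constructor <;> norm_num : (1:ℝ) ∈ Ioc 0 1)]
        with n hn
      have h1n : (0:ℝ) < 1 - n := by linarith [hn.2]
      have hge : n ≤ n ^ α := by
        calc n = n ^ (1:ℝ) := (Real.rpow_one n).symm
        _ ≤ n ^ α := Real.rpow_le_rpow_of_exponent_ge hn.1 hn.2.le hα1.le
      have e1 : (1 - n) * (1 - n) ^ (-α) = (1 - n) ^ (1 - α) := by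
        have h2 := Real.rpow_add h1n 1 (-α)
        rw [Real.rpow_one] at h2
        rw [show (1:ℝ) - α = 1 + -α by ring, ← h2]
      have : (1 - n ^ α) * (1 - n) ^ (-α) ≤ (1 - n) ^ (1 - α) := by
        rw [← e1]
        exact mul_le_mul_of_nonneg_right (by linarith) (Real.rpow_nonneg h1n.le _)
      simp only [hW]
      gcongr
  have key : ∫ n in (0:ℝ)..1, f' n = 0 - 1 / α :=
    intervalIntegral.integral_eq_sub_of_hasDerivAt_of_tendsto one_pos hderiv hint ha hb
  have split : ∀ n : ℝ, (1 - n ^ α) * (1 - n) ^ (-α - 1)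
      = f' n + n ^ (α - 1) * (1 - n) ^ (-α) := by
    intro n; simp only [hf']; ring
  calc ∫ n in (0:ℝ)..1, (1 - n ^ α) * (1 - n) ^ (-α - 1)
      = ∫ n in (0:ℝ)..1, (f' n + n ^ (α - 1) * (1 - n) ^ (-α)) := by
        apply intervalIntegral.integral_congr; intro n _; exact split n
    _ = (∫ n in (0:ℝ)..1, f' n) + ∫ n in (0:ℝ)..1, n ^ (α - 1) * (1 - n) ^ (-α) :=
        intervalIntegral.integral_add hint (int_beta α hα hα1)
    _ = Real.Gamma α * Real.Gamma (1 - α) - 1 / α := by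
        rw [key, beta_real α hα hα1]; ring

theorem aux_int (α : ℝ) (hα0 : -1 < α - 1) (d a b : ℝ) (h : ℝ → ℝ) (hh : Continuous h) :
    IntervalIntegrable (fun θ : ℝ => (θ - d) ^ (α - 1) * h θ) volume a b := by
  have h1 : IntervalIntegrable (fun θ : ℝ => (θ - d) ^ (α - 1)) volume a b := by
    have := (intervalIntegrable_rpow' (a := a - d) (b := b - d) hα0).comp_sub_right d
    simpa using this
  exact h1.mul_continuousOn hh.continuousOn

theorem aux_int0 (α : ℝ) (hα0 : -1 < α - 1) (a b : ℝ) (h : ℝ → ℝ) (hh : Continuous h) :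
    IntervalIntegrable (fun θ : ℝ => θ ^ (α - 1) * h θ) volume a b := by
  simpa using aux_int α hα0 0 a b h hh

-- ∫_n^1 m^(α-1) dm
theorem aux_rpow_int (α : ℝ) (hα : 0 < α) (n : ℝ) :
    ∫ m in n..1, m ^ (α - 1) = (1 - n ^ α) / α := by
  rw [integral_rpow (Or.inl (by linarith))]
  rw [show α - 1 + 1 = α by ring, Real.one_rpow]

set_option maxHeartbeats 2000000 in
theorem diagonal_limit_f33
    (α : ℝ) (hα : 0 < α) (hα1 : α < 1) (cH : ℝ) (hcH : 0 < cH)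
    (g : ℝ → ℝ) (hg : Continuous g)
    (K : ℝ → ℝ → ℝ)
    (hK : ∀ r u : ℝ, 0 < r → r ≤ u → u ≤ 1 →
      K u r = cH * α * r ^ (-α) * ∫ θ in r..u, (θ - r) ^ (α - 1) * θ ^ α)
    (s : ℝ) (hs : s ∈ Set.Ioc (0:ℝ) 1) :
    Tendsto
      (fun r : ℝ => (α * s ^ α / Real.Gamma (1 - α)) *
        ∫ u in r..s, ((K s r - K u r) / (s - u) ^ (α + 1)) * u ^ (-α) * g u)
      (nhdsWithin s (Set.Ioo 0 s))
      (nhds (cH * Real.Gamma (1 + α) * g s - cH / Real.Gamma (1 - α) * g s)) := by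
  obtain ⟨hs0, hs1⟩ := hs
  have hΓpos : 0 < Real.Gamma (1 - α) := Real.Gamma_pos_of_pos (by linarith)
  have hpowc : Continuous (fun x : ℝ => x ^ α) :=
    continuous_id.rpow_const (fun x => Or.inr hα.le)
  obtain ⟨M, hM⟩ := (isCompact_Icc (a := (0:ℝ)) (b := 1)).exists_bound_of_continuousOn
    hg.continuousOn
  have hM0 : 0 ≤ M := le_trans (norm_nonneg _) (hM s ⟨hs0.le, hs1⟩)
  set Ψ : ℝ → ℝ → ℝ := fun r n =>
    (∫ m in n..1, m ^ (α - 1) * ((s - r) * m + r) ^ α) * (1 - n) ^ (-α - 1) *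
      ((s - r) * n + r) ^ (-α) * g ((s - r) * n + r) with hΨdef
  -- Step 1: exact rewriting of the integral for r ∈ Ioo 0 s
  have step1 : ∀ r ∈ Ioo (0:ℝ) s,
      (∫ u in r..s, ((K s r - K u r) / (s - u) ^ (α + 1)) * u ^ (-α) * g u)
        = cH * α * r ^ (-α) * ∫ n in (0:ℝ)..1, Ψ r n := by
    intro r hr
    obtain ⟨hr0, hrs⟩ := hr
    set δ : ℝ := s - r with hδdef
    have hδ : 0 < δ := by simp only [hδdef]; linarith
    set H : ℝ → ℝ := fun u => ((K s r - K u r) / (s - u) ^ (α + 1)) * u ^ (-α) * g u with hHdef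
    -- pointwise identity
    have hpt : ∀ n ∈ Icc (0:ℝ) 1, H (δ * n + r) = (cH * α * r ^ (-α) / δ) * Ψ r n := by
      intro n hn
      rcases eq_or_lt_of_le hn.2 with h1 | h1
      · subst h1
        have hu : δ * 1 + r = s := by simp only [hδdef]; ring
        rw [hu]
        simp [hHdef, hΨdef, sub_self, intervalIntegral.integral_same]
      · have h1n : (0:ℝ) < 1 - n := by linarith
        have hn0 : (0:ℝ) ≤ n := hn.1
        have hu0 : 0 < δ * n + r := by positivity
        have hur : r ≤ δ * n + r := by nlinarith
        have hus : δ * n + r ≤ s := by nlinarith [hδdef]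
        have hu1 : δ * n + r ≤ 1 := le_trans hus hs1
        have hint1 : IntervalIntegrable (fun θ : ℝ => (θ - r) ^ (α - 1) * θ ^ α) volume r s :=
          aux_int α (by linarith) r r s _ hpowc
        have hint2 : IntervalIntegrable (fun θ : ℝ => (θ - r) ^ (α - 1) * θ ^ α) volume r
            (δ * n + r) := aux_int α (by linarith) r r _ _ hpowc
        have hKdiff : K s r - K (δ * n + r) r
            = cH * α * r ^ (-α) * ∫ θ in (δ * n + r)..s, (θ - r) ^ (α - 1) * θ ^ α := by
          rw [hK r s hr0 (by linarith) hs1, hK r (δ * n + r) hr0 hur hu1, ← mul_sub,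
            intervalIntegral.integral_interval_sub_left hint1 hint2]
        have hsub2 : (∫ θ in (δ * n + r)..s, (θ - r) ^ (α - 1) * θ ^ α)
            = δ * ∫ m in n..1, (δ * m) ^ (α - 1) * (δ * m + r) ^ α := by
          have h2 := intervalIntegral.integral_comp_mul_add
            (a := n) (b := 1) (fun θ => (θ - r) ^ (α - 1) * θ ^ α) hδ.ne' r
          simp only [add_sub_cancel_right] at h2
          rw [show δ * 1 + r = s by simp only [hδdef]; ring] at h2
          rw [h2, smul_eq_mul, ← mul_assoc, mul_inv_cancel₀ hδ.ne', one_mul]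
        have hsub3 : (∫ m in n..1, (δ * m) ^ (α - 1) * (δ * m + r) ^ α)
            = δ ^ (α - 1) * ∫ m in n..1, m ^ (α - 1) * (δ * m + r) ^ α := by
          rw [← intervalIntegral.integral_const_mul]
          apply intervalIntegral.integral_congr
          intro m hm
          rw [uIcc_of_le h1.le] at hm
          dsimp only
          rw [Real.mul_rpow hδ.le (le_trans hn0 hm.1)]
          ring
        have hw : s - (δ * n + r) = δ * (1 - n) := by simp only [hδdef]; ring
        have hsplit : (δ * (1 - n)) ^ (α + 1) = δ ^ (α + 1) * (1 - n) ^ (α + 1) :=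
          Real.mul_rpow hδ.le h1n.le
        have ha1 : δ * δ ^ (α - 1) = δ ^ α := by
          have h3 := Real.rpow_add hδ 1 (α - 1)
          rw [Real.rpow_one] at h3
          rw [← h3]; congr 1; ring
        have hb1 : δ ^ (α + 1) = δ ^ α * δ := Real.rpow_add_one hδ.ne' α
        have hc1 : (1 - n) ^ (-α - 1) = ((1 - n) ^ (α + 1))⁻¹ := by
          rw [show -α - 1 = -(α + 1) by ring, Real.rpow_neg h1n.le]
        have hd1 : (0:ℝ) < δ ^ α := Real.rpow_pos_of_pos hδ α
        have he1 : (0:ℝ) < (1 - n) ^ (α + 1) := Real.rpow_pos_of_pos h1n (α + 1)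
        simp only [hHdef, hΨdef]
        rw [← hδdef, hKdiff, hsub2, hsub3, hw, hsplit, hc1]
        rw [show δ * (δ ^ (α - 1) * ∫ m in n..1, m ^ (α - 1) * (δ * m + r) ^ α)
            = δ ^ α * ∫ m in n..1, m ^ (α - 1) * (δ * m + r) ^ α from by
          rw [← mul_assoc, ha1], hb1]
        field_simp
    -- substitution in the outer integral
    have e0 := intervalIntegral.integral_comp_mul_add (a := (0:ℝ)) (b := 1) H hδ.ne' r
    rw [show δ * 0 + r = r by ring, show δ * 1 + r = s by simp only [hδdef]; ring] at e0
    have e1 : (∫ n in (0:ℝ)..1, H (δ * n + r))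
        = (cH * α * r ^ (-α) / δ) * ∫ n in (0:ℝ)..1, Ψ r n := by
      rw [← intervalIntegral.integral_const_mul]
      apply intervalIntegral.integral_congr
      intro n hn
      rw [uIcc_of_le (by norm_num : (0:ℝ) ≤ 1)] at hn
      exact hpt n hn
    rw [e1] at e0
    have := congrArg (fun x => δ * x) e0
    simp only [smul_eq_mul, ← mul_assoc, mul_inv_cancel₀ hδ.ne', one_mul] at this
    rw [← this]
    field_simp
  -- limit function
  set Ψl : ℝ → ℝ := fun n =>
    (s ^ α * (1 - n ^ α) / α) * (1 - n) ^ (-α - 1) * s ^ (-α) * g s with hΨldef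
  -- Step 2: convergence of inner integrals
  have hbase_cont : ∀ r : ℝ, Continuous (fun m : ℝ => ((s - r) * m + r) ^ α) := by
    intro r
    exact ((continuous_const.mul continuous_id).add continuous_const).rpow_const
      (fun x => Or.inr hα.le)
  have hq_int : ∀ r a b : ℝ, IntervalIntegrable
      (fun m : ℝ => m ^ (α - 1) * ((s - r) * m + r) ^ α) volume a b :=
    fun r a b => aux_int0 α (by linarith) a b _ (hbase_cont r)
  have step2 : Tendsto (fun r : ℝ => ∫ n in (0:ℝ)..1, Ψ r n)
      (nhdsWithin s (Set.Ioo 0 s)) (nhds (∫ n in (0:ℝ)..1, Ψl n)) := by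
    simp only [intervalIntegral.integral_of_le (by norm_num : (0:ℝ) ≤ 1)]
    set Cb : ℝ := (s/2) ^ (-α) * M / α with hCbdef
    apply MeasureTheory.tendsto_integral_filter_of_dominated_convergence
      (bound := fun n => Cb * (1 - n) ^ (-α))
    · -- measurability
      apply Filter.Eventually.of_forall
      intro r
      have hIc : Continuous (fun n : ℝ => ∫ m in n..1, m ^ (α - 1) * ((s - r) * m + r) ^ α) := by
        have h2 := (intervalIntegral.continuous_primitive (hq_int r) 1).neg
        have h3 : (fun n : ℝ => ∫ m in n..1, m ^ (α - 1) * ((s - r) * m + r) ^ α)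
            = fun n : ℝ => -∫ m in (1:ℝ)..n, m ^ (α - 1) * ((s - r) * m + r) ^ α :=
          funext fun n => by rw [intervalIntegral.integral_symm]
        rw [h3]; exact h2
      have hmeas : Measurable (fun n : ℝ => Ψ r n) := by
        simp only [hΨdef]
        exact ((hIc.measurable.mul (by fun_prop)).mul (by fun_prop)).mul
          (hg.comp (by continuity)).measurable
      exact hmeas.aestronglyMeasurable
    · -- bound
      have hev : ∀ᶠ r in nhdsWithin s (Set.Ioo 0 s), r ∈ Ioo (s/2) s := by
        filter_upwards [mem_nhdsWithin_of_mem_nhds (Ioi_mem_nhds (by linarith : s/2 < s)),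
          self_mem_nhdsWithin] with r h1 h2
        exact ⟨h1, h2.2⟩
      filter_upwards [hev, self_mem_nhdsWithin] with r hr hr'
      rw [ae_restrict_iff' measurableSet_Ioc]
      filter_upwards with n hn
      rcases eq_or_lt_of_le hn.2 with h1 | h1
      · subst h1
        have hz : Ψ r 1 = 0 := by
          simp [hΨdef, intervalIntegral.integral_same]
        rw [hz, norm_zero, show (1:ℝ) - 1 = 0 by ring,
          Real.zero_rpow (by linarith : -α ≠ 0), mul_zero]
      · have hn0 : (0:ℝ) < n := hn.1
        have h1n : (0:ℝ) < 1 - n := by linarith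
        have hδ : (0:ℝ) < s - r := by linarith [hr.2]
        have hu0 : (0:ℝ) < (s - r) * n + r := by nlinarith [hr'.1]
        have hulb : s/2 ≤ (s - r) * n + r := by nlinarith [hr.1]
        have hu1 : (s - r) * n + r ≤ 1 := by nlinarith [hn.2, hr'.2]
        have hInn : (0:ℝ) ≤ ∫ m in n..1, m ^ (α - 1) * ((s - r) * m + r) ^ α := by
          apply intervalIntegral.integral_nonneg hn.2
          intro m hm
          have hm0 : (0:ℝ) ≤ m := le_trans hn0.le hm.1
          have : (0:ℝ) ≤ (s - r) * m + r := by nlinarith [hr'.1]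
          exact mul_nonneg (Real.rpow_nonneg hm0 _) (Real.rpow_nonneg this _)
        have hIle : (∫ m in n..1, m ^ (α - 1) * ((s - r) * m + r) ^ α) ≤ (1 - n)/α := by
          have hmono : (∫ m in n..1, m ^ (α - 1) * ((s - r) * m + r) ^ α)
              ≤ ∫ m in n..1, m ^ (α - 1) := by
            apply intervalIntegral.integral_mono_on hn.2 (hq_int r n 1)
              (intervalIntegrable_rpow' (by linarith))
            intro m hm
            have hm0 : (0:ℝ) ≤ m := le_trans hn0.le hm.1
            have hb0 : (0:ℝ) ≤ (s - r) * m + r := by nlinarith [hr'.1]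
            have hb1 : (s - r) * m + r ≤ 1 := by nlinarith [hm.2, hr'.2]
            calc m ^ (α - 1) * ((s - r) * m + r) ^ α
                ≤ m ^ (α - 1) * 1 := mul_le_mul_of_nonneg_left
                  (Real.rpow_le_one hb0 hb1 hα.le) (Real.rpow_nonneg hm0 _)
              _ = m ^ (α - 1) := mul_one _
          rw [aux_rpow_int α hα n] at hmono
          have hge : n ≤ n ^ α := by
            calc n = n ^ (1:ℝ) := (Real.rpow_one n).symm
            _ ≤ n ^ α := Real.rpow_le_rpow_of_exponent_ge hn0 hn.2 hα1.le
          have : (1 - n ^ α)/α ≤ (1 - n)/α := by gcongr <;> linarith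
          linarith
        have h2 := Real.rpow_add h1n 1 (-α - 1)
        rw [Real.rpow_one] at h2
        have h2' : (1 - n) * (1 - n) ^ (-α - 1) = (1 - n) ^ (-α) := by
          rw [← h2]; congr 1; ring
        have hgu : |g ((s - r) * n + r)| ≤ M := by
          have := hM ((s - r) * n + r) ⟨hu0.le, hu1⟩
          rwa [Real.norm_eq_abs] at this
        have hru : ((s - r) * n + r) ^ (-α) ≤ (s/2) ^ (-α) :=
          Real.rpow_le_rpow_of_nonpos (by positivity) hulb (by linarith)
        rw [Real.norm_eq_abs]
        have hA : |Ψ r n| = (∫ m in n..1, m ^ (α - 1) * ((s - r) * m + r) ^ α) *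
            (1 - n) ^ (-α - 1) * ((s - r) * n + r) ^ (-α) * |g ((s - r) * n + r)| := by
          simp only [hΨdef]
          rw [abs_mul, abs_mul, abs_mul, abs_of_nonneg hInn,
            abs_of_nonneg (Real.rpow_nonneg h1n.le _), abs_of_nonneg (Real.rpow_nonneg hu0.le _)]
        have hB : (∫ m in n..1, m ^ (α - 1) * ((s - r) * m + r) ^ α) *
            (1 - n) ^ (-α - 1) * ((s - r) * n + r) ^ (-α) * |g ((s - r) * n + r)|
            ≤ ((1 - n)/α) * (1 - n) ^ (-α - 1) * ((s/2) ^ (-α)) * M := by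
          have lvl1 := mul_le_mul_of_nonneg_right hIle (Real.rpow_nonneg h1n.le (-α - 1))
          have nn1 : (0:ℝ) ≤ (1 - n)/α * (1 - n) ^ (-α - 1) :=
            mul_nonneg (div_nonneg h1n.le hα.le) (Real.rpow_nonneg h1n.le _)
          have lvl2 := mul_le_mul lvl1 hru (Real.rpow_nonneg hu0.le _) nn1
          have nn2 : (0:ℝ) ≤ (1 - n)/α * (1 - n) ^ (-α - 1) * (s/2) ^ (-α) :=
            mul_nonneg nn1 (Real.rpow_nonneg (by positivity) _)
          exact mul_le_mul lvl2 hgu (abs_nonneg _) nn2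
        have hC : ((1 - n)/α) * (1 - n) ^ (-α - 1) * ((s/2) ^ (-α)) * M
            = Cb * (1 - n) ^ (-α) := by
          rw [hCbdef]
          rw [show (1 - n)/α * (1 - n) ^ (-α - 1) * (s/2) ^ (-α) * M
            = ((1 - n) * (1 - n) ^ (-α - 1)) * (s/2) ^ (-α) * M / α by ring, h2']
          ring
        rw [hA, ← hC]
        exact hB
    · exact (integrableOn_one_sub α hα1).const_mul Cb
    · -- pointwise limit
      have hone : ∀ᵐ n ∂(volume.restrict (Ioc (0:ℝ) 1)), n ∈ Ioo (0:ℝ) 1 := by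
        rw [ae_restrict_iff' measurableSet_Ioc]
        filter_upwards [compl_mem_ae_iff.mpr (Real.volume_singleton (a := (1:ℝ)))] with n hn1 hn
        exact ⟨hn.1, lt_of_le_of_ne hn.2 hn1⟩
      filter_upwards [hone] with n hn
      have hu : Tendsto (fun r : ℝ => (s - r) * n + r) (nhdsWithin s (Set.Ioo 0 s)) (nhds s) := by
        have hc : Continuous fun r : ℝ => (s - r) * n + r :=
          ((continuous_const.sub continuous_id).mul continuous_const).add continuous_id
        have h0 : (s - s) * n + s = s := by ring
        exact (h0 ▸ hc.continuousAt.tendsto).mono_left nhdsWithin_le_nhds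
      have ha1 : Tendsto (fun r : ℝ => ((s - r) * n + r) ^ (-α)) (nhdsWithin s (Set.Ioo 0 s))
          (nhds (s ^ (-α))) :=
        ((Real.continuousAt_rpow_const s (-α) (Or.inl hs0.ne')).tendsto).comp hu
      have ha2 : Tendsto (fun r : ℝ => g ((s - r) * n + r)) (nhdsWithin s (Set.Ioo 0 s))
          (nhds (g s)) := (hg.continuousAt.tendsto).comp hu
      have hI : Tendsto (fun r : ℝ => ∫ m in n..1, m ^ (α - 1) * ((s - r) * m + r) ^ α)
          (nhdsWithin s (Set.Ioo 0 s)) (nhds (s ^ α * (1 - n ^ α)/α)) := by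
        have key : ∀ r ∈ Ioo (0:ℝ) s,
            |(∫ m in n..1, m ^ (α - 1) * ((s - r) * m + r) ^ α) - s ^ α * (1 - n ^ α)/α|
              ≤ (s ^ α - r ^ α) * ((1 - n ^ α)/α) := by
          intro r hr
          have hδ : (0:ℝ) ≤ s - r := by linarith [hr.2]
          have hint_c : IntervalIntegrable (fun m : ℝ => m ^ (α - 1) * s ^ α) volume n 1 :=
            aux_int0 α (by linarith) n 1 _ continuous_const
          have hL : (∫ m in n..1, m ^ (α - 1) * s ^ α) = s ^ α * (1 - n ^ α)/α := by
            rw [intervalIntegral.integral_mul_const, aux_rpow_int α hα n]; ring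
          rw [← hL, ← intervalIntegral.integral_sub (hq_int r n 1) hint_c]
          refine le_trans (intervalIntegral.abs_integral_le_integral_abs hn.2.le) ?_
          have h4 : (∫ m in n..1, |m ^ (α - 1) * ((s - r) * m + r) ^ α - m ^ (α - 1) * s ^ α|)
              ≤ ∫ m in n..1, m ^ (α - 1) * (s ^ α - r ^ α) := by
            apply intervalIntegral.integral_mono_on hn.2.le
              ((hq_int r n 1).sub hint_c).abs
              (aux_int0 α (by linarith) n 1 _ continuous_const)
            intro m hm
            have hm0 : (0:ℝ) < m := lt_of_lt_of_le hn.1 hm.1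
            rw [show m ^ (α - 1) * ((s - r) * m + r) ^ α - m ^ (α - 1) * s ^ α
              = m ^ (α - 1) * (((s - r) * m + r) ^ α - s ^ α) by ring, abs_mul,
              abs_of_nonneg (Real.rpow_nonneg hm0.le _)]
            apply mul_le_mul_of_nonneg_left _ (Real.rpow_nonneg hm0.le _)
            have hbl : r ≤ (s - r) * m + r := by nlinarith [hm.1, hn.1]
            have hbu : (s - r) * m + r ≤ s := by nlinarith [hm.2]
            have h5 : ((s - r) * m + r) ^ α ≤ s ^ α :=
              Real.rpow_le_rpow (by linarith [hr.1]) hbu hα.le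
            have h6 : r ^ α ≤ ((s - r) * m + r) ^ α :=
              Real.rpow_le_rpow hr.1.le hbl hα.le
            rw [abs_sub_comm, abs_of_nonneg (by linarith)]
            linarith
          refine le_trans h4 (le_of_eq ?_)
          rw [intervalIntegral.integral_mul_const, aux_rpow_int α hα n]
          ring
        have h0 : Tendsto (fun r : ℝ => (s ^ α - r ^ α) * ((1 - n ^ α)/α))
            (nhdsWithin s (Set.Ioo 0 s)) (nhds 0) := by
          have hc : ContinuousAt (fun r : ℝ => (s ^ α - r ^ α) * ((1 - n ^ α)/α)) s :=
            (continuousAt_const.sub (Real.continuousAt_rpow_const s α (Or.inr hα.le))).mul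
              continuousAt_const
          have h00 : (s ^ α - s ^ α) * ((1 - n ^ α)/α) = 0 := by ring
          exact (h00 ▸ hc.tendsto).mono_left nhdsWithin_le_nhds
        have hz : Tendsto (fun r : ℝ =>
            (∫ m in n..1, m ^ (α - 1) * ((s - r) * m + r) ^ α) - s ^ α * (1 - n ^ α)/α)
            (nhdsWithin s (Set.Ioo 0 s)) (nhds 0) := by
          apply squeeze_zero_norm' _ h0
          filter_upwards [self_mem_nhdsWithin] with r hr
          simpa [Real.norm_eq_abs] using key r hr
        have := hz.add (tendsto_const_nhds (x := s ^ α * (1 - n ^ α)/α))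
        simpa using this
      simp only [hΨdef, hΨldef]
      exact ((hI.mul tendsto_const_nhds).mul ha1).mul ha2
  -- value of limit integral
  have hssa : s ^ α * s ^ (-α) = 1 := by
    rw [← Real.rpow_add hs0]; simp
  have hval : ∫ n in (0:ℝ)..1, Ψl n
      = (g s / α) * (Real.Gamma α * Real.Gamma (1 - α) - 1 / α) := by
    have e : ∀ n : ℝ, Ψl n = (g s / α) * ((1 - n ^ α) * (1 - n) ^ (-α - 1)) := by
      intro n
      simp only [hΨldef]
      rw [show s ^ α * (1 - n ^ α) / α * (1 - n) ^ (-α - 1) * s ^ (-α) * g s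
        = (s ^ α * s ^ (-α)) * ((g s / α) * ((1 - n ^ α) * (1 - n) ^ (-α - 1))) by ring, hssa,
        one_mul]
    rw [show (∫ n in (0:ℝ)..1, Ψl n)
        = ∫ n in (0:ℝ)..1, (g s / α) * ((1 - n ^ α) * (1 - n) ^ (-α - 1)) from
      intervalIntegral.integral_congr fun n _ => e n]
    rw [intervalIntegral.integral_const_mul, J_val α hα hα1]
  -- assemble
  have hrp : Tendsto (fun r : ℝ => r ^ (-α)) (nhdsWithin s (Set.Ioo 0 s))
      (nhds (s ^ (-α))) :=
    ((Real.continuousAt_rpow_const s (-α) (Or.inl hs0.ne')).tendsto).mono_left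
      nhdsWithin_le_nhds
  have hmain : Tendsto
      (fun r : ℝ => (α * s ^ α / Real.Gamma (1 - α)) * (cH * α * r ^ (-α) * ∫ n in (0:ℝ)..1, Ψ r n))
      (nhdsWithin s (Set.Ioo 0 s))
      (nhds ((α * s ^ α / Real.Gamma (1 - α)) * (cH * α * s ^ (-α) * ∫ n in (0:ℝ)..1, Ψl n))) := by
    exact tendsto_const_nhds.mul (((tendsto_const_nhds.mul hrp)).mul step2)
  have hfinal : (α * s ^ α / Real.Gamma (1 - α)) * (cH * α * s ^ (-α) * ∫ n in (0:ℝ)..1, Ψl n)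
      = cH * Real.Gamma (1 + α) * g s - cH / Real.Gamma (1 - α) * g s := by
    rw [hval]
    have hss : s ^ α * s ^ (-α) = 1 := by
      rw [← Real.rpow_add hs0]; simp
    have hΓ1 : Real.Gamma (1 + α) = α * Real.Gamma α := by
      rw [add_comm, Real.Gamma_add_one hα.ne']
    rw [hΓ1, Real.rpow_neg hs0.le]
    have hsp : s ^ α ≠ 0 := (Real.rpow_pos_of_pos hs0 α).ne'
    field_simp
  rw [← hfinal]
  apply hmain.congr'
  filter_upwards [self_mem_nhdsWithin] with r hr
  rw [step1 r hr]
end
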